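/- Let B=(b_{ij})_{i,j∈ℤ} be the discrete Lotka–Volterra exchange matrix and let P=(p_{ij})_{i,j∈ℤ} be a skew-symmetric rational matrix with PB=O (entrywise finite sums). Then P satisfies both (a) p_{i+3,j+3}=p_{ij} for all i,j∈ℤ, and (b) μ_{0̄}(P)_{ij} = p_{i−1,j−1} for all i,j∈ℤ, if and only if there exist a₀∈ℚ and a map q:ℤ→ℚ with q(0)=0 and q(−n)=−q(n) for all n, such that p_{3i+k,3j+l} = q(j−i) + (l−k)·a₀ for all i,j∈ℤ and k,l∈{0,1,2}. -/

import Mathlib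

/-- The discrete Lotka–Volterra exchange matrix `B = (b_{ij})_{i,j ∈ ℤ}`. -/
def lvB (i j : ℤ) : ℤ :=
  if i % 3 = 0 then
    (if j - i = 1 then 1 else 0) + (if j - i = -1 then 1 else 0)
      - (if j - i = 2 then 1 else 0) - (if j - i = -2 then 1 else 0)
  else if i % 3 = 1 then
    (if j - i = 1 then 1 else 0) + (if j - i = 2 then 1 else 0)
      + (if j - i = -3 then 1 else 0) - (if j - i = -1 then 1 else 0)
      - (if j - i = -2 then 1 else 0) - (if j - i = 3 then 1 else 0)
  else
    -(if j - i = 1 then 1 else 0) - (if j - i = -1 then 1 else 0)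
      + (if j - i = 2 then 1 else 0) + (if j - i = -2 then 1 else 0)

/-- The composite Poisson-matrix mutation `μ_{0̄}` at all points of `3ℤ`, written
entrywise: `p'_{ij} = p_{ij}` if `i, j ∉ 3ℤ`;
`p'_{i,3b} = -p_{i,3b} + p_{i,3b-2} + p_{i,3b+2}` if `i ∉ 3ℤ`;
`p'_{3a,j} = -p_{3a,j} + p_{3a-2,j} + p_{3a+2,j}` if `j ∉ 3ℤ`; and
`p'_{3a,3b} = Σ_{ε,ε' ∈ {-2,0,2}} s(ε) s(ε') p_{3a+ε,3b+ε'}` with `s(0) = -1`,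
`s(±2) = 1`. -/
def lvMut0 (P : ℤ → ℤ → ℚ) (i j : ℤ) : ℚ :=
  if i % 3 = 0 then
    if j % 3 = 0 then
      P (i-2) (j-2) - P (i-2) j + P (i-2) (j+2)
        - P i (j-2) + P i j - P i (j+2)
        + P (i+2) (j-2) - P (i+2) j + P (i+2) (j+2)
    else -P i j + P (i-2) j + P (i+2) j
  else
    if j % 3 = 0 then -P i j + P i (j-2) + P i (j+2)
    else P i j

/-- Finite sums over `ℤ` supported in a window of length 7. -/
lemma lvSum7 (f : ℤ → ℚ) (j : ℤ) (h : ∀ l, l < j - 3 ∨ j + 3 < l → f l = 0) :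
    ∑ᶠ l, f l = f (j-3)+f (j-2)+f (j-1)+f j+f (j+1)+f (j+2)+f (j+3) := by
  have hsub : Function.support f ⊆ ↑(Finset.Icc (j-3) (j+3)) := by
    intro l hl
    simp only [Finset.coe_Icc, Set.mem_Icc]
    by_contra hc
    exact hl (h l (by omega))
  rw [finsum_eq_finset_sum_of_support_subset f hsub]
  have he : Finset.Icc (j-3) (j+3) = {j-3, j-2, j-1, j, j+1, j+2, j+3} := by
    ext x
    simp only [Finset.mem_Icc, Finset.mem_insert, Finset.mem_singleton]
    omega
  rw [he]
  rw [Finset.sum_insert (by simp only [Finset.mem_insert, Finset.mem_singleton]; omega)]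
  rw [Finset.sum_insert (by simp only [Finset.mem_insert, Finset.mem_singleton]; omega)]
  rw [Finset.sum_insert (by simp only [Finset.mem_insert, Finset.mem_singleton]; omega)]
  rw [Finset.sum_insert (by simp only [Finset.mem_insert, Finset.mem_singleton]; omega)]
  rw [Finset.sum_insert (by simp only [Finset.mem_insert, Finset.mem_singleton]; omega)]
  rw [Finset.sum_insert (by simp only [Finset.mem_singleton]; omega)]
  rw [Finset.sum_singleton]
  ring

set_option maxHeartbeats 4000000 in
/-- A skew-symmetric rational matrix `P` with `PB = O` (for the discrete
Lotka–Volterra exchange matrix `B`) satisfies both (a) `p_{i+3,j+3} = p_{ij}` and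
(b) `μ_{0̄}(P)_{ij} = p_{i-1,j-1}`, if and only if there exist `a₀ ∈ ℚ` and
`q : ℤ → ℚ` with `q 0 = 0`, `q (-n) = -q n`, such that
`p_{3i+k,3j+l} = q (j - i) + (l - k) a₀` for all `i, j ∈ ℤ`, `k, l ∈ {0,1,2}`. -/
theorem stmt10 (P : ℤ → ℤ → ℚ) (hP : ∀ i j, P j i = -P i j)
    (hPB : ∀ i j, ∑ᶠ l, P i l * (lvB l j : ℚ) = 0) :
    ((∀ i j, P (i + 3) (j + 3) = P i j) ∧ (∀ i j, lvMut0 P i j = P (i - 1) (j - 1))) ↔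
    ∃ (a₀ : ℚ) (q : ℤ → ℚ), q 0 = 0 ∧ (∀ n, q (-n) = -q n) ∧
      ∀ (i j : ℤ) (k l : Fin 3),
        P (3 * i + ((k : ℕ) : ℤ)) (3 * j + ((l : ℕ) : ℤ)) =
          q (j - i) + (((l : ℕ) : ℚ) - ((k : ℕ) : ℚ)) * a₀ := by
  constructor
  · rintro ⟨ha, hb⟩
    -- relations coming from `PB = O`
    have rel0 : ∀ i j : ℤ, j % 3 = 0 →
        P i (j-2) + P i (j+2) = P i (j-1) + P i (j+1) := by
      intro i j hj
      have h := hPB i j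
      rw [lvSum7 (fun l => P i l * (lvB l j : ℚ)) j (by
        intro l hl
        have hz : lvB l j = 0 := by unfold lvB; split_ifs <;> omega
        simp [hz])] at h
      have e1 : lvB (j-3) j = 0 := by unfold lvB; split_ifs <;> omega
      have e2 : lvB (j-2) j = 1 := by unfold lvB; split_ifs <;> omega
      have e3 : lvB (j-1) j = -1 := by unfold lvB; split_ifs <;> omega
      have e4 : lvB j j = 0 := by unfold lvB; split_ifs <;> omega
      have e5 : lvB (j+1) j = -1 := by unfold lvB; split_ifs <;> omega
      have e6 : lvB (j+2) j = 1 := by unfold lvB; split_ifs <;> omega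
      have e7 : lvB (j+3) j = 0 := by unfold lvB; split_ifs <;> omega
      simp only [e1, e2, e3, e4, e5, e6, e7] at h
      push_cast at h
      linarith
    have rel2 : ∀ i j : ℤ, j % 3 = 2 →
        P i (j-1) + P i (j+1) = P i (j-2) + P i (j+2) := by
      intro i j hj
      have h := hPB i j
      rw [lvSum7 (fun l => P i l * (lvB l j : ℚ)) j (by
        intro l hl
        have hz : lvB l j = 0 := by unfold lvB; split_ifs <;> omega
        simp [hz])] at h
      have e1 : lvB (j-3) j = 0 := by unfold lvB; split_ifs <;> omega
      have e2 : lvB (j-2) j = -1 := by unfold lvB; split_ifs <;> omega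
      have e3 : lvB (j-1) j = 1 := by unfold lvB; split_ifs <;> omega
      have e4 : lvB j j = 0 := by unfold lvB; split_ifs <;> omega
      have e5 : lvB (j+1) j = 1 := by unfold lvB; split_ifs <;> omega
      have e6 : lvB (j+2) j = -1 := by unfold lvB; split_ifs <;> omega
      have e7 : lvB (j+3) j = 0 := by unfold lvB; split_ifs <;> omega
      simp only [e1, e2, e3, e4, e5, e6, e7] at h
      push_cast at h
      linarith
    -- shift invariance by multiples of 3
    have hshift : ∀ (n i j : ℤ), P (i + 3*n) (j + 3*n) = P i j := by
      intro n
      induction n using Int.induction_on with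
      | zero => intro i j; norm_num
      | succ n ih =>
        intro i j
        have h1 : i + 3*((n:ℤ)+1) = (i + 3*n) + 3 := by ring
        have h2 : j + 3*((n:ℤ)+1) = (j + 3*n) + 3 := by ring
        rw [h1, h2, ha, ih]
      | pred n ih =>
        intro i j
        have h0 := ha (i + 3*(-(n:ℤ)-1)) (j + 3*(-(n:ℤ)-1))
        have h1 : i + 3*(-(n:ℤ)-1) + 3 = i + 3*(-(n:ℤ)) := by ring
        have h2 : j + 3*(-(n:ℤ)-1) + 3 = j + 3*(-(n:ℤ)) := by ring
        rw [h1, h2, ih] at h0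
        exact h0.symm
    -- constant first differences within a block, columns 0→1
    have lemE : ∀ (i d : ℤ), P i (3*d+1) - P i (3*d) = P i 1 - P i 0 := by
      intro i d
      induction d using Int.induction_on with
      | zero => norm_num
      | succ n ih =>
        have h := rel2 i (3*(n:ℤ)+2) (by omega)
        have e1 : 3*(n:ℤ)+2-1 = 3*n+1 := by ring
        have e2 : 3*(n:ℤ)+2+1 = 3*((n:ℤ)+1) := by ring
        have e3 : 3*(n:ℤ)+2-2 = 3*n := by ring
        have e4 : 3*(n:ℤ)+2+2 = 3*((n:ℤ)+1)+1 := by ring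
        rw [e1, e2, e3, e4] at h
        linarith
      | pred n ih =>
        have h := rel2 i (3*(-(n:ℤ)-1)+2) (by omega)
        have e1 : 3*(-(n:ℤ)-1)+2-1 = 3*(-(n:ℤ)-1)+1 := by ring
        have e2 : 3*(-(n:ℤ)-1)+2+1 = 3*(-(n:ℤ)) := by ring
        have e3 : 3*(-(n:ℤ)-1)+2-2 = 3*(-(n:ℤ)-1) := by ring
        have e4 : 3*(-(n:ℤ)-1)+2+2 = 3*(-(n:ℤ))+1 := by ring
        rw [e1, e2, e3, e4] at h
        linarith
    -- constant first differences within a block, columns 1→2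
    have lemC : ∀ (i d : ℤ), P i (3*d+2) - P i (3*d+1) = P i 2 - P i 1 := by
      intro i d
      induction d using Int.induction_on with
      | zero => norm_num
      | succ n ih =>
        have h := rel0 i (3*((n:ℤ)+1)) (by omega)
        have e1 : 3*((n:ℤ)+1)-2 = 3*n+1 := by ring
        have e2 : 3*((n:ℤ)+1)+2 = 3*((n:ℤ)+1)+2 := by ring
        have e3 : 3*((n:ℤ)+1)-1 = 3*n+2 := by ring
        have e4 : 3*((n:ℤ)+1)+1 = 3*((n:ℤ)+1)+1 := by ring
        rw [e1, e3] at h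
        linarith
      | pred n ih =>
        have h := rel0 i (3*(-(n:ℤ))) (by omega)
        have e1 : 3*(-(n:ℤ))-2 = 3*(-(n:ℤ)-1)+1 := by ring
        have e2 : 3*(-(n:ℤ))+2 = 3*(-(n:ℤ))+2 := by ring
        have e3 : 3*(-(n:ℤ))-1 = 3*(-(n:ℤ)-1)+2 := by ring
        have e4 : 3*(-(n:ℤ))+1 = 3*(-(n:ℤ))+1 := by ring
        rw [e1, e3] at h
        linarith
    -- mutation relations in pointwise form
    have hmutNN : ∀ i j : ℤ, i % 3 ≠ 0 → j % 3 ≠ 0 → P i j = P (i-1) (j-1) := by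
      intro i j hi hj
      have h := hb i j
      unfold lvMut0 at h
      rw [if_neg hi, if_neg hj] at h
      exact h
    have hmutN0 : ∀ i j : ℤ, i % 3 ≠ 0 → j % 3 = 0 →
        -P i j + P i (j-2) + P i (j+2) = P (i-1) (j-1) := by
      intro i j hi hj
      have h := hb i j
      unfold lvMut0 at h
      rw [if_neg hi, if_pos hj] at h
      exact h
    have H1 : ∀ d : ℤ, P 1 (3*d+1) = P 0 (3*d) := by
      intro d
      have h := hmutNN 1 (3*d+1) (by norm_num) (by omega)
      have e1 : (1:ℤ)-1 = 0 := by norm_num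
      have e2 : 3*d+1-1 = 3*d := by ring
      rw [e1, e2] at h
      exact h
    have H2 : ∀ d : ℤ, P 2 (3*d+1) = P 1 (3*d) := by
      intro d
      have h := hmutNN 2 (3*d+1) (by norm_num) (by omega)
      have e1 : (2:ℤ)-1 = 1 := by norm_num
      have e2 : 3*d+1-1 = 3*d := by ring
      rw [e1, e2] at h
      exact h
    -- small constants
    have p00 : P 0 0 = 0 := by have := hP 0 0; linarith
    have p10 : P 1 0 = -P 0 1 := hP 0 1
    have p20 : P 2 0 = -P 0 2 := hP 0 2
    have p11 : P 1 1 = 0 := by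
      have h := H1 0
      norm_num at h
      rw [h, p00]
    have p12 : P 1 2 = P 0 1 := by
      have h := hmutNN 1 2 (by norm_num) (by norm_num)
      norm_num at h
      exact h
    have p21 : P 2 1 = P 1 0 := by
      have h := H2 0
      norm_num at h
      exact h
    have p22 : P 2 2 = 0 := by
      have h := hmutNN 2 2 (by norm_num) (by norm_num)
      norm_num at h
      rw [h, p11]
    have p02 : P 0 2 = 2 * P 0 1 := by
      have h := hmutN0 1 0 (by norm_num) (by norm_num)
      norm_num at h
      -- h : -P 1 0 + P 1 (-2) + P 1 2 = P 0 (-1)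
      have h1 := H1 (-1)
      norm_num at h1
      -- h1 : P 1 (-2) = P 0 (-3)
      have h2 := lemC 0 (-1)
      have h3 := lemE 0 (-1)
      norm_num at h2 h3
      linarith
    -- the full block formula
    have row : ∀ (d k l : ℤ), 0 ≤ k → k < 3 → 0 ≤ l → l < 3 →
        P k (3*d+l) = P 0 (3*d) + ((l:ℚ) - (k:ℚ)) * P 0 1 := by
      intro d k l hk0 hk3 hl0 hl3
      have hE0 := lemE 0 d
      have hC0 := lemC 0 d
      have hE1 := lemE 1 d
      have hC1 := lemC 1 d
      have hE2 := lemE 2 d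
      have hC2 := lemC 2 d
      have h1 := H1 d
      have h2 := H2 d
      interval_cases k <;> interval_cases l <;> norm_num <;>
        (try push_cast) <;> linarith
    refine ⟨P 0 1, fun d => P 0 (3*d), by simpa using p00, ?_, ?_⟩
    · intro n
      have h := hshift n 0 (-(3*n))
      have e1 : (0:ℤ)+3*n = 3*n := by ring
      have e2 : -(3*n)+3*n = 0 := by ring
      rw [e1, e2] at h
      have h2 := hP 0 (3*n)
      show P 0 (3*(-n)) = -P 0 (3*n)
      have e3 : 3*(-n) = -(3*n) := by ring
      rw [e3, ← h]
      exact h2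
    · intro i j k l
      have hs := hshift i ((k:ℕ):ℤ) (3*(j-i)+((l:ℕ):ℤ))
      have e1 : ((k:ℕ):ℤ) + 3*i = 3*i + ((k:ℕ):ℤ) := by ring
      have e2 : 3*(j-i)+((l:ℕ):ℤ)+3*i = 3*j + ((l:ℕ):ℤ) := by ring
      rw [e1, e2] at hs
      rw [hs]
      have hr := row (j-i) ((k:ℕ):ℤ) ((l:ℕ):ℤ)
        (by positivity) (by exact_mod_cast k.isLt) (by positivity) (by exact_mod_cast l.isLt)
      rw [hr]
      show _ = P 0 (3*(j-i)) + _
      push_cast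
      ring
  · rintro ⟨a₀, q, hq0, hqneg, hform⟩
    have hQ : ∀ a b k l : ℤ, 0 ≤ k → k < 3 → 0 ≤ l → l < 3 →
        P (3*a+k) (3*b+l) = q (b-a) + ((l:ℚ) - (k:ℚ)) * a₀ := by
      intro a b k l hk0 hk3 hl0 hl3
      interval_cases k <;> interval_cases l
      · simpa using hform a b ⟨0, by norm_num⟩ ⟨0, by norm_num⟩
      · simpa using hform a b ⟨0, by norm_num⟩ ⟨1, by norm_num⟩
      · simpa using hform a b ⟨0, by norm_num⟩ ⟨2, by norm_num⟩
      · simpa using hform a b ⟨1, by norm_num⟩ ⟨0, by norm_num⟩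
      · simpa using hform a b ⟨1, by norm_num⟩ ⟨1, by norm_num⟩
      · simpa using hform a b ⟨1, by norm_num⟩ ⟨2, by norm_num⟩
      · simpa using hform a b ⟨2, by norm_num⟩ ⟨0, by norm_num⟩
      · simpa using hform a b ⟨2, by norm_num⟩ ⟨1, by norm_num⟩
      · simpa using hform a b ⟨2, by norm_num⟩ ⟨2, by norm_num⟩
    have hQ2 : ∀ x y : ℤ, P x y =
        q (y / 3 - x / 3) + (((y % 3 : ℤ) : ℚ) - ((x % 3 : ℤ) : ℚ)) * a₀ := by
      intro x y
      have hx : x = 3*(x/3) + x % 3 := by omega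
      have hy : y = 3*(y/3) + y % 3 := by omega
      calc P x y = P (3*(x/3) + x % 3) (3*(y/3) + y % 3) := by rw [← hx, ← hy]
        _ = q (y/3 - x/3) + (((y % 3 : ℤ) : ℚ) - ((x % 3 : ℤ) : ℚ)) * a₀ :=
          hQ (x/3) (y/3) (x % 3) (y % 3) (by omega) (by omega) (by omega) (by omega)
    constructor
    · intro i j
      rw [hQ2 (i+3) (j+3), hQ2 i j]
      have e1 : (i+3)/3 = i/3 + 1 := by omega
      have e2 : (j+3)/3 = j/3 + 1 := by omega
      have e3 : (i+3)%3 = i%3 := by omega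
      have e4 : (j+3)%3 = j%3 := by omega
      rw [e1, e2, e3, e4]
      have e5 : j/3 + 1 - (i/3 + 1) = j/3 - i/3 := by ring
      rw [e5]
    · intro i j
      have hi : i % 3 = 0 ∨ i % 3 = 1 ∨ i % 3 = 2 := by omega
      have hj : j % 3 = 0 ∨ j % 3 = 1 ∨ j % 3 = 2 := by omega
      unfold lvMut0
      rcases hi with hi | hi | hi <;> rcases hj with hj | hj | hj
      · rw [if_pos hi, if_pos hj]
        simp only [hQ2]
        have d1 : (i-2)/3 = i/3 - 1 := by omega
        have d2 : (i-2)%3 = 1 := by omega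
        have d3 : (i+2)/3 = i/3 := by omega
        have d4 : (i+2)%3 = 2 := by omega
        have d5 : (i-1)/3 = i/3 - 1 := by omega
        have d6 : (i-1)%3 = 2 := by omega
        have e1 : (j-2)/3 = j/3 - 1 := by omega
        have e2 : (j-2)%3 = 1 := by omega
        have e3 : (j+2)/3 = j/3 := by omega
        have e4 : (j+2)%3 = 2 := by omega
        have e5 : (j-1)/3 = j/3 - 1 := by omega
        have e6 : (j-1)%3 = 2 := by omega
        rw [d1, d2, d3, d4, d5, d6, e1, e2, e3, e4, e5, e6, hi, hj]
        push_cast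
        ring_nf
      · rw [if_pos hi, if_neg (by omega)]
        simp only [hQ2]
        have d1 : (i-2)/3 = i/3 - 1 := by omega
        have d2 : (i-2)%3 = 1 := by omega
        have d3 : (i+2)/3 = i/3 := by omega
        have d4 : (i+2)%3 = 2 := by omega
        have d5 : (i-1)/3 = i/3 - 1 := by omega
        have d6 : (i-1)%3 = 2 := by omega
        rw [d1, d2, d3, d4, d5, d6, hi]
        have e5 : (j-1)/3 = j/3 := by omega
        have e6 : (j-1)%3 = 0 := by omega
        rw [e5, e6, hj]
        push_cast
        ring_nf
      · rw [if_pos hi, if_neg (by omega)]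
        simp only [hQ2]
        have d1 : (i-2)/3 = i/3 - 1 := by omega
        have d2 : (i-2)%3 = 1 := by omega
        have d3 : (i+2)/3 = i/3 := by omega
        have d4 : (i+2)%3 = 2 := by omega
        have d5 : (i-1)/3 = i/3 - 1 := by omega
        have d6 : (i-1)%3 = 2 := by omega
        rw [d1, d2, d3, d4, d5, d6, hi]
        have e5 : (j-1)/3 = j/3 := by omega
        have e6 : (j-1)%3 = 1 := by omega
        rw [e5, e6, hj]
        push_cast
        ring_nf
      · rw [if_neg (by omega), if_pos hj]
        simp only [hQ2]
        have d5 : (i-1)/3 = i/3 := by omega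
        have d6 : (i-1)%3 = 0 := by omega
        rw [d5, d6, hi]
        have e1 : (j-2)/3 = j/3 - 1 := by omega
        have e2 : (j-2)%3 = 1 := by omega
        have e3 : (j+2)/3 = j/3 := by omega
        have e4 : (j+2)%3 = 2 := by omega
        have e5 : (j-1)/3 = j/3 - 1 := by omega
        have e6 : (j-1)%3 = 2 := by omega
        rw [e1, e2, e3, e4, e5, e6, hj]
        push_cast
        ring_nf
      · rw [if_neg (by omega), if_neg (by omega)]
        simp only [hQ2]
        have d5 : (i-1)/3 = i/3 := by omega
        have d6 : (i-1)%3 = 0 := by omega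
        rw [d5, d6, hi]
        have e5 : (j-1)/3 = j/3 := by omega
        have e6 : (j-1)%3 = 0 := by omega
        rw [e5, e6, hj]
        push_cast
        ring_nf
      · rw [if_neg (by omega), if_neg (by omega)]
        simp only [hQ2]
        have d5 : (i-1)/3 = i/3 := by omega
        have d6 : (i-1)%3 = 0 := by omega
        rw [d5, d6, hi]
        have e5 : (j-1)/3 = j/3 := by omega
        have e6 : (j-1)%3 = 1 := by omega
        rw [e5, e6, hj]
        push_cast
        ring_nf
      · rw [if_neg (by omega), if_pos hj]
        simp only [hQ2]
        have d5 : (i-1)/3 = i/3 := by omega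
        have d6 : (i-1)%3 = 1 := by omega
        rw [d5, d6, hi]
        have e1 : (j-2)/3 = j/3 - 1 := by omega
        have e2 : (j-2)%3 = 1 := by omega
        have e3 : (j+2)/3 = j/3 := by omega
        have e4 : (j+2)%3 = 2 := by omega
        have e5 : (j-1)/3 = j/3 - 1 := by omega
        have e6 : (j-1)%3 = 2 := by omega
        rw [e1, e2, e3, e4, e5, e6, hj]
        push_cast
        ring_nf
      · rw [if_neg (by omega), if_neg (by omega)]
        simp only [hQ2]
        have d5 : (i-1)/3 = i/3 := by omega
        have d6 : (i-1)%3 = 1 := by omega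
        rw [d5, d6, hi]
        have e5 : (j-1)/3 = j/3 := by omega
        have e6 : (j-1)%3 = 0 := by omega
        rw [e5, e6, hj]
        push_cast
        ring_nf
      · rw [if_neg (by omega), if_neg (by omega)]
        simp only [hQ2]
        have d5 : (i-1)/3 = i/3 := by omega
        have d6 : (i-1)%3 = 1 := by omega
        rw [d5, d6, hi]
        have e5 : (j-1)/3 = j/3 := by omega
        have e6 : (j-1)%3 = 1 := by omega
        rw [e5, e6, hj]
        push_cast
        ring_nf
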